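/- Let (V,C,u) be an order unit space with a strictly convex cone, g : C° → C° a bijective antihomogeneous order-antimorphism, and x ∈ C°. Define G_x : V → V by G_x(z) = −lim_{t→0} (g(x+tz) − g(x))/t (the limit exists in ‖·‖_u). Then G_x is a bijection of V onto V satisfying G_x(λz) = λ G_x(z) for all λ ∈ ℝ and z ∈ V, and for all w, z ∈ V one has w ≤_C z if and only if G_x(w) ≤_C G_x(z); moreover the inverse of G_x is the map w ↦ −lim_{t→0} (g⁻¹(g(x)+tw) − g⁻¹(g(x)))/t. -/

import Mathlib

open Set Filter Topology

variable {V : Type*} [NormedAddCommGroup V] [NormedSpace ℝ V]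

/-- `(V, C, u)` is an order unit space whose norm is the order unit norm of `(C, u)`:
`C` is an Archimedean cone and `u` is an order unit of it. -/
structure IsOrderUnitSpace (C : Set V) (u : V) : Prop where
  convex : Convex ℝ C
  smul_mem : ∀ l : ℝ, 0 ≤ l → ∀ x ∈ C, l • x ∈ C
  salient : C ∩ (-C) = {0}
  archimedean : ∀ x : V, ∀ y ∈ C, (∀ n : ℕ, 0 < n → y - (n : ℝ) • x ∈ C) → -x ∈ C
  unit_mem : u ∈ C
  order_unit : ∀ x : V, ∃ l : ℝ, 0 ≤ l ∧ l • u - x ∈ C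
  norm_eq : ∀ x : V, ‖x‖ = sInf {l : ℝ | 0 < l ∧ x + l • u ∈ C ∧ l • u - x ∈ C}

/-- `M(x/y) = inf {β > 0 : x ≤_C β y}`. -/
noncomputable def Mratio (C : Set V) (x y : V) : ℝ :=
  sInf {b : ℝ | 0 < b ∧ b • y - x ∈ C}

/-- The cone `C` is strictly convex: the open segment between any two linearly
independent boundary points lies in the interior. -/
def StrictlyConvexCone (C : Set V) : Prop :=
  ∀ x ∈ frontier C, ∀ y ∈ frontier C, LinearIndependent ℝ ![x, y] →
    openSegment ℝ x y ⊆ interior C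

/-- `g` is antihomogeneous on the interior of `C`: `g (λ x) = λ⁻¹ g x`. -/
def IsAntihomogeneous (C : Set V) (g : V → V) : Prop :=
  ∀ l : ℝ, 0 < l → ∀ x ∈ interior C, g (l • x) = l⁻¹ • g x

/-- `g` is an order-antimorphism of the interior of `C`: `x ≤_C y ↔ g y ≤_C g x`. -/
def IsOrderAntimorphism (C : Set V) (g : V → V) : Prop :=
  ∀ x ∈ interior C, ∀ y ∈ interior C, (y - x ∈ C ↔ g x - g y ∈ C)

/-- A state of `(V, C, u)`: a positive linear functional with `φ u = 1`. -/
def IsState (C : Set V) (u : V) (φ : V →ₗ[ℝ] ℝ) : Prop :=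
  (∀ x ∈ C, 0 ≤ φ x) ∧ φ u = 1

namespace IsOrderUnitSpace

variable {C : Set V} {u : V} (h : IsOrderUnitSpace C u)
include h

theorem add_mem {a b : V} (ha : a ∈ C) (hb : b ∈ C) : a + b ∈ C := by
  have := h.convex ha hb (by norm_num : (0:ℝ) ≤ 1/2) (by norm_num : (0:ℝ) ≤ 1/2) (by norm_num)
  have h2 := h.smul_mem 2 (by norm_num) _ this
  convert h2 using 1
  module

theorem exists_bound (v : V) : ∃ L : ℝ, 0 < L ∧ v + L • u ∈ C ∧ L • u - v ∈ C := by
  obtain ⟨l₁, hl₁, h₁⟩ := h.order_unit v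
  obtain ⟨l₂, hl₂, h₂⟩ := h.order_unit (-v)
  refine ⟨l₁ + l₂ + 1, by positivity, ?_, ?_⟩
  · have : (l₂ • u - -v) + (l₁ + 1) • u ∈ C :=
      h.add_mem h₂ (h.smul_mem _ (by linarith) _ h.unit_mem)
    convert this using 1; module
  · have : (l₁ • u - v) + (l₂ + 1) • u ∈ C :=
      h.add_mem h₁ (h.smul_mem _ (by linarith) _ h.unit_mem)
    convert this using 1; module

theorem norm_le {v : V} {l : ℝ} (h1 : v + l • u ∈ C) (h2 : l • u - v ∈ C) (hl : 0 ≤ l) :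
    ‖v‖ ≤ l := by
  rw [h.norm_eq]
  refine le_of_forall_pos_le_add fun ε hε => ?_
  refine csInf_le ⟨0, fun b hb => le_of_lt hb.1⟩ ?_
  refine ⟨by linarith, ?_, ?_⟩
  · have : (v + l • u) + ε • u ∈ C := h.add_mem h1 (h.smul_mem _ hε.le _ h.unit_mem)
    convert this using 1; module
  · have : (l • u - v) + ε • u ∈ C := h.add_mem h2 (h.smul_mem _ hε.le _ h.unit_mem)
    convert this using 1; module

theorem order_of_norm_lt {v : V} {l : ℝ} (hvl : ‖v‖ < l) :
    v + l • u ∈ C ∧ l • u - v ∈ C := by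
  obtain ⟨L, hL, hL1, hL2⟩ := h.exists_bound v
  have hne : {l : ℝ | 0 < l ∧ v + l • u ∈ C ∧ l • u - v ∈ C}.Nonempty := ⟨L, hL, hL1, hL2⟩
  rw [h.norm_eq] at hvl
  obtain ⟨s, hs, hsl⟩ := exists_lt_of_csInf_lt hne hvl
  obtain ⟨hs0, hs1, hs2⟩ := hs
  constructor
  · have : (v + s • u) + (l - s) • u ∈ C := h.add_mem hs1 (h.smul_mem _ (by linarith) _ h.unit_mem)
    convert this using 1; module
  · have : (s • u - v) + (l - s) • u ∈ C := h.add_mem hs2 (h.smul_mem _ (by linarith) _ h.unit_mem)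
    convert this using 1; module

theorem isClosed : IsClosed C := by
  rw [← closure_subset_iff_isClosed]
  intro y hy
  have key : ∀ ε : ℝ, 0 < ε → y + ε • u ∈ C := by
    intro ε hε
    obtain ⟨c, hc, hcy⟩ := Metric.mem_closure_iff.mp hy ε hε
    have hlt : ‖y - c‖ < ε := by rwa [← dist_eq_norm]
    have := (h.order_of_norm_lt hlt).1
    have : ((y - c) + ε • u) + c ∈ C := h.add_mem this hc
    convert this using 1; abel
  have harch := h.archimedean (-y) u h.unit_mem (fun n hn => ?_)
  · simpa using harch
  · have := key ((n : ℝ)⁻¹) (by positivity)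
    have := h.smul_mem n (by positivity) _ this
    convert this using 1
    have hn' : (n:ℝ) ≠ 0 := by positivity
    rw [smul_add, smul_smul, mul_inv_cancel₀ hn']
    module

theorem interior_smul_mem {a : V} {l : ℝ} (hl : 0 < l) (ha : a ∈ interior C) :
    l • a ∈ interior C := by
  rw [mem_interior_iff_mem_nhds] at ha ⊢
  have hcont : ContinuousAt (fun v : V => l⁻¹ • v) (l • a) := by fun_prop
  have : (fun v : V => l⁻¹ • v) ⁻¹' C ∈ 𝓝 (l • a) := by
    apply hcont.preimage_mem_nhds
    rwa [inv_smul_smul₀ hl.ne']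
  filter_upwards [this] with v hv
  have := h.smul_mem l hl.le _ hv
  rwa [smul_inv_smul₀ hl.ne'] at this

end IsOrderUnitSpace

section Aux

variable {C : Set V} {u : V}

theorem eventually_line_mem_interior {x : V} (hx : x ∈ interior C) (v : V) :
    ∀ᶠ t : ℝ in 𝓝[>] (0:ℝ), x + t • v ∈ interior C := by
  have hcont : Continuous fun t : ℝ => x + t • v := by fun_prop
  have htend : Tendsto (fun t : ℝ => x + t • v) (𝓝 0) (𝓝 x) := by
    simpa using hcont.tendsto 0
  exact (htend.eventually (isOpen_interior.eventually_mem hx)).filter_mono nhdsWithin_le_nhds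

theorem Ioi_le_punctured : 𝓝[>] (0:ℝ) ≤ 𝓝[≠] (0:ℝ) :=
  nhdsWithin_mono _ (fun t ht => ne_of_gt ht)

theorem G_mono (h : IsOrderUnitSpace C u) {g : V → V} (hmor : IsOrderAntimorphism C g)
    {x : V} (hx : x ∈ interior C) {G : V → V}
    (hG : ∀ z : V, Tendsto (fun t : ℝ => t⁻¹ • (g (x + t • z) - g x))
      (𝓝[≠] (0:ℝ)) (𝓝 (-(G z))))
    {w z : V} (hwz : z - w ∈ C) : G z - G w ∈ C := by
  have hD : Tendsto (fun t : ℝ => t⁻¹ • (g (x + t • w) - g x) - t⁻¹ • (g (x + t • z) - g x))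
      (𝓝[>] (0:ℝ)) (𝓝 (G z - G w)) := by
    have h1 := (((hG w).mono_left Ioi_le_punctured).sub ((hG z).mono_left Ioi_le_punctured))
    have : -G w - -G z = G z - G w := by abel
    rwa [this] at h1
  refine h.isClosed.mem_of_tendsto hD ?_
  filter_upwards [eventually_line_mem_interior hx w, eventually_line_mem_interior hx z,
    self_mem_nhdsWithin] with t hw ht htpos
  have htpos : (0:ℝ) < t := htpos
  have hmem : (x + t • z) - (x + t • w) ∈ C := by
    have := h.smul_mem t htpos.le _ hwz
    convert this using 1; module
  have := (hmor _ hw _ ht).mp hmem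
  have h2 := h.smul_mem t⁻¹ (by positivity) _ this
  have heq : t⁻¹ • (g (x + t • w) - g x) - t⁻¹ • (g (x + t • z) - g x)
      = t⁻¹ • (g (x + t • w) - g (x + t • z)) := by module
  rwa [heq]

theorem G_homog {g : V → V} {x : V} {G : V → V}
    (hG : ∀ z : V, Tendsto (fun t : ℝ => t⁻¹ • (g (x + t • z) - g x))
      (𝓝[≠] (0:ℝ)) (𝓝 (-(G z)))) (l : ℝ) (z : V) : G (l • z) = l • G z := by
  rcases eq_or_ne l 0 with rfl | hl
  · have h0 : Tendsto (fun t : ℝ => t⁻¹ • (g (x + t • ((0:ℝ) • z)) - g x))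
        (𝓝[≠] (0:ℝ)) (𝓝 0) := by
      simpa using tendsto_const_nhds (α := V) (f := 𝓝[≠] (0:ℝ))
    have h1 := tendsto_nhds_unique (hG ((0:ℝ) • z)) h0
    simp only [zero_smul, neg_eq_zero] at h1 ⊢
    exact h1
  · have hmul : Tendsto (fun t : ℝ => t * l) (𝓝[≠] (0:ℝ)) (𝓝[≠] (0:ℝ)) := by
      rw [tendsto_nhdsWithin_iff]
      refine ⟨?_, ?_⟩
      · have h1 : Tendsto (fun t : ℝ => t * l) (𝓝 0) (𝓝 (0 * l)) :=
          (continuous_mul_right l).tendsto 0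
        simpa using h1.mono_left nhdsWithin_le_nhds
      · filter_upwards [self_mem_nhdsWithin] with t ht
        exact mul_ne_zero ht hl
    have hcomp := ((hG z).comp hmul).const_smul l
    have heq : (fun t : ℝ => l • ((fun s : ℝ => s⁻¹ • (g (x + s • z) - g x)) ((fun t => t * l) t)))
        = fun t : ℝ => t⁻¹ • (g (x + t • (l • z)) - g x) := by
      funext t
      show l • ((t * l)⁻¹ • (g (x + (t * l) • z) - g x)) = t⁻¹ • (g (x + t • (l • z)) - g x)
      rw [smul_smul, smul_smul, mul_inv, mul_comm t l]
      congr 1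
      rcases eq_or_ne t 0 with rfl | ht
      · simp
      · field_simp
    rw [Function.comp_def] at hcomp
    rw [heq] at hcomp
    have := tendsto_nhds_unique (hG (l • z)) hcomp
    have : G (l • z) = -(l • -G z) := by rw [← this]; simp
    rw [this]; simp

end Aux

section Key

variable {C : Set V} {u : V}

set_option maxHeartbeats 1000000 in
theorem G_key (h : IsOrderUnitSpace C u) {g g' : V → V}
    (hmapg : MapsTo g (interior C) (interior C))
    (hmapg' : MapsTo g' (interior C) (interior C))
    (hg'mor : IsOrderAntimorphism C g')
    (hg'anti : ∀ l : ℝ, 0 < l → ∀ a ∈ interior C, g' (l • a) = l⁻¹ • g' a)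
    (hleft : ∀ a ∈ interior C, g' (g a) = a)
    {x : V} (hx : x ∈ interior C) {G G' : V → V}
    (hG : ∀ z : V, Tendsto (fun t : ℝ => t⁻¹ • (g (x + t • z) - g x))
      (𝓝[≠] (0:ℝ)) (𝓝 (-(G z))))
    (hG' : ∀ w : V, Tendsto (fun t : ℝ => t⁻¹ • (g' (g x + t • w) - g' (g x)))
      (𝓝[≠] (0:ℝ)) (𝓝 (-(G' w))))
    (z : V) : G' (-(G z)) = -z := by
  have hy : g x ∈ interior C := hmapg hx
  have hg'y : g' (g x) = x := hleft x hx
  set y := g x with hy_def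
  set w := -(G z) with hw_def
  set q : ℝ → V := fun t => t⁻¹ • (g (x + t • z) - y) with hq_def
  have hq : Tendsto q (𝓝[>] (0:ℝ)) (𝓝 w) := (hG z).mono_left Ioi_le_punctured
  set ε : ℝ → ℝ := fun t => ‖q t - w‖ + t with hε_def
  clear_value q
  have hε0 : Tendsto ε (𝓝[>] (0:ℝ)) (𝓝 0) := by
    have h1 : Tendsto (fun t => ‖q t - w‖) (𝓝[>] (0:ℝ)) (𝓝 0) := by
      have := (hq.sub (tendsto_const_nhds : Tendsto (fun _ : ℝ => w) (𝓝[>] (0:ℝ)) (𝓝 w))).norm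
      simpa using this
    have h2 : Tendsto (fun t : ℝ => t) (𝓝[>] (0:ℝ)) (𝓝 0) :=
      tendsto_id.mono_left nhdsWithin_le_nhds
    simpa [hε_def] using h1.add h2
  clear_value ε
  obtain ⟨r, hr, hball⟩ := Metric.isOpen_iff.mp isOpen_interior y hy
  set δ : ℝ := r / (2 * (‖u‖ + 1)) with hδ_def
  have hδ : 0 < δ := by positivity
  have hyδ : y - δ • u ∈ interior C := by
    apply hball
    rw [Metric.mem_ball, dist_eq_norm]
    have he : y - δ • u - y = -(δ • u) := by abel
    rw [he, norm_neg, norm_smul, Real.norm_eq_abs, abs_of_pos hδ]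
    rw [hδ_def, div_mul_eq_mul_div, div_lt_iff₀ (by positivity)]
    nlinarith [norm_nonneg u]
  obtain ⟨l₀, hl₀, hμ'⟩ := h.order_unit x
  set μ : ℝ := l₀ + 1 with hμ_def
  have hμpos : 0 < μ := by positivity
  have hμ : μ • u - x ∈ C := by
    have := h.add_mem hμ' h.unit_mem
    convert this using 1; module
  set c : ℝ := 4 * μ / δ with hc_def
  have hc : 0 < c := by positivity
  have htendA : Tendsto (fun t : ℝ => t⁻¹ • (g' (y + t • w) - x)) (𝓝[>] (0:ℝ))
      (𝓝 (-(G' w))) := by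
    have := (hG' w).mono_left Ioi_le_punctured
    simpa [hg'y] using this
  clear_value y w
  have hEs : Tendsto (fun t : ℝ => t * ε t / δ) (𝓝[>] (0:ℝ)) (𝓝 0) := by
    have h2 : Tendsto (fun t : ℝ => t) (𝓝[>] (0:ℝ)) (𝓝 0) :=
      tendsto_id.mono_left nhdsWithin_le_nhds
    have := (h2.mul hε0).div_const δ
    simpa using this
  have hbound : ∀ᶠ t in 𝓝[>] (0:ℝ),
      ‖z - t⁻¹ • (g' (y + t • w) - x)‖ ≤ c * ε t := by
    filter_upwards [self_mem_nhdsWithin, eventually_line_mem_interior hx z,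
      eventually_line_mem_interior hyδ w,
      eventually_line_mem_interior (h.interior_smul_mem (by norm_num : (0:ℝ) < 2⁻¹) hy) w,
      eventually_line_mem_interior hy w,
      hEs.eventually (eventually_lt_nhds (show (0:ℝ) < 1/2 by norm_num))]
      with t ht hE2 hE3 hE4 hE5 hE6
    have ht : (0 : ℝ) < t := ht
    have ht' := ht.ne'
    have hδ' := hδ.ne'
    have hεt : 0 < ε t := by rw [hε_def]; exact add_pos_of_nonneg_of_pos (norm_nonneg _) ht
    set s : ℝ := t * ε t / δ with hs_def
    clear_value s
    have hspos : 0 < s := by rw [hs_def]; positivity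
    have hs2 : s < 1/2 := hE6
    have h1ps : 0 < 1 + s := by linarith
    have h1ms : 0 < 1 - s := by linarith
    set a : V := y + t • w with ha_def
    set b : V := g (x + t • z) with hb_def
    clear_value a b
    have hamem : a ∈ interior C := hE5
    have hbmem : b ∈ interior C := by rw [hb_def]; exact hmapg hE2
    have hb_eq : b = a + t • (q t - w) := by
      have hqt : t • q t = b - y := by
        rw [hq_def, hb_def]
        exact smul_inv_smul₀ ht.ne' _
      have he : a + t • (q t - w) = y + t • q t := by
        rw [smul_sub, ha_def]; abel
      rw [he, hqt]; abel
    have horder := h.order_of_norm_lt (show ‖q t - w‖ < ε t by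
      rw [hε_def]; simp only []; linarith)
    have hE3' : a - δ • u ∈ C := by
      have he : a - δ • u = (y - δ • u) + t • w := by rw [ha_def]; abel
      rw [he]; exact interior_subset hE3
    have hE4' : a - (2⁻¹ : ℝ) • y ∈ C := by
      have he : a - (2⁻¹ : ℝ) • y = (2⁻¹ : ℝ) • y + t • w := by rw [ha_def]; module
      rw [he]; exact interior_subset hE4
    have hi : (1 + s) • a - b ∈ C := by
      have hm1 : s • (a - δ • u) ∈ C := h.smul_mem _ hspos.le _ hE3'
      have hm2 : t • (ε t • u - (q t - w)) ∈ C := h.smul_mem _ ht.le _ horder.2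
      have hsum := h.add_mem hm1 hm2
      have heq : (1 + s) • a - b = s • (a - δ • u) + t • (ε t • u - (q t - w)) := by
        rw [hb_eq, hs_def]
        match_scalars <;> field_simp <;> ring
      rw [heq]; exact hsum
    have hii : b - (1 - s) • a ∈ C := by
      have hm1 : s • (a - δ • u) ∈ C := h.smul_mem _ hspos.le _ hE3'
      have hm2 : t • ((q t - w) + ε t • u) ∈ C := h.smul_mem _ ht.le _ horder.1
      have hsum := h.add_mem hm2 hm1
      have heq : b - (1 - s) • a = t • ((q t - w) + ε t • u) + s • (a - δ • u) := by
        rw [hb_eq, hs_def]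
        match_scalars <;> field_simp <;> ring
      rw [heq]; exact hsum
    have hE7 : (1 + s) • a ∈ interior C := h.interior_smul_mem h1ps hamem
    have hE8 : (1 - s) • a ∈ interior C := h.interior_smul_mem h1ms hamem
    have hgb_ge : g' b - (1 + s)⁻¹ • g' a ∈ C := by
      have := (hg'mor b hbmem ((1 + s) • a) hE7).mp hi
      rwa [hg'anti (1 + s) h1ps a hamem] at this
    have hgb_le : (1 - s)⁻¹ • g' a - g' b ∈ C := by
      have := (hg'mor ((1 - s) • a) hE8 b hbmem).mp hii
      rwa [hg'anti (1 - s) h1ms a hamem] at this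
    have hga_le : (2:ℝ) • x - g' a ∈ C := by
      have hhalf : (2⁻¹ : ℝ) • y ∈ interior C := h.interior_smul_mem (by norm_num) hy
      have h1 := (hg'mor ((2⁻¹ : ℝ) • y) hhalf a hamem).mp hE4'
      rw [hg'anti 2⁻¹ (by norm_num) y hy, hg'y] at h1
      have he : (2⁻¹:ℝ)⁻¹ • x = (2:ℝ) • x := by norm_num
      rwa [he] at h1
    have hinv1 : (1 - s) * (1 - s)⁻¹ = 1 := mul_inv_cancel₀ h1ms.ne'
    have hipos : 0 < (1 - s)⁻¹ := inv_pos.mpr h1ms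
    have hinv2 : (1 + s) * (1 + s)⁻¹ = 1 := mul_inv_cancel₀ h1ps.ne'
    have hjpos : 0 < (1 + s)⁻¹ := inv_pos.mpr h1ps
    have hr1 : (0:ℝ) ≤ (1 - s)⁻¹ - 1 := by
      nlinarith [mul_pos hspos hipos]
    have hile2 : (1 - s)⁻¹ ≤ 2 := by
      nlinarith [mul_nonneg (by linarith : (0:ℝ) ≤ 1 - 2*s) hipos.le]
    have hr1le : 2 * ((1 - s)⁻¹ - 1) ≤ 4 * s := by
      nlinarith [mul_nonneg hspos.le (by linarith : (0:ℝ) ≤ 2 - (1-s)⁻¹)]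
    have hr2 : (0:ℝ) ≤ 1 - (1 + s)⁻¹ := by
      nlinarith [mul_pos hspos hjpos]
    have hjle1 : (1 + s)⁻¹ ≤ 1 := by
      nlinarith [mul_pos hspos hjpos]
    have hr2le : 2 * (1 - (1 + s)⁻¹) ≤ 4 * s := by
      nlinarith [mul_nonneg hspos.le (by linarith : (0:ℝ) ≤ 1 - (1+s)⁻¹)]
    have hU : (4 * s * μ) • u - (g' b - g' a) ∈ C := by
      have c1 : ((1 - s)⁻¹ - 1) • g' a - (g' b - g' a) ∈ C := by
        have heq : ((1 - s)⁻¹ - 1) • g' a - (g' b - g' a) = (1 - s)⁻¹ • g' a - g' b := by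
          module
        rw [heq]; exact hgb_le
      have c2 : ((1 - s)⁻¹ - 1) • ((2:ℝ) • x - g' a) ∈ C := h.smul_mem _ hr1 _ hga_le
      have c12 := h.add_mem c1 c2
      have c3 : (4 * s - 2 * ((1 - s)⁻¹ - 1)) • x ∈ C :=
        h.smul_mem _ (by linarith) _ (interior_subset hx)
      have c123 := h.add_mem c12 c3
      have c4 : (4 * s) • (μ • u - x) ∈ C := h.smul_mem _ (by positivity) _ hμ
      have call := h.add_mem c123 c4
      have heq2 : (4 * s * μ) • u - (g' b - g' a)
          = (((1 - s)⁻¹ - 1) • g' a - (g' b - g' a) + ((1 - s)⁻¹ - 1) • ((2:ℝ) • x - g' a)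
            + (4 * s - 2 * ((1 - s)⁻¹ - 1)) • x) + (4 * s) • (μ • u - x) := by
        module
      rw [heq2]; exact call
    have hL : (g' b - g' a) + (4 * s * μ) • u ∈ C := by
      have d1 : (g' b - g' a) + (1 - (1 + s)⁻¹) • g' a ∈ C := by
        have heq : (g' b - g' a) + (1 - (1 + s)⁻¹) • g' a = g' b - (1 + s)⁻¹ • g' a := by
          module
        rw [heq]; exact hgb_ge
      have d2 : (1 - (1 + s)⁻¹) • ((2:ℝ) • x - g' a) ∈ C := h.smul_mem _ hr2 _ hga_le
      have d12 := h.add_mem d1 d2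
      have d3 : (4 * s - 2 * (1 - (1 + s)⁻¹)) • x ∈ C :=
        h.smul_mem _ (by linarith) _ (interior_subset hx)
      have d123 := h.add_mem d12 d3
      have d4 : (4 * s) • (μ • u - x) ∈ C := h.smul_mem _ (by positivity) _ hμ
      have dall := h.add_mem d123 d4
      have heq2 : (g' b - g' a) + (4 * s * μ) • u
          = ((g' b - g' a) + (1 - (1 + s)⁻¹) • g' a + (1 - (1 + s)⁻¹) • ((2:ℝ) • x - g' a)
            + (4 * s - 2 * (1 - (1 + s)⁻¹)) • x) + (4 * s) • (μ • u - x) := by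
        module
      rw [heq2]; exact dall
    have hgb : g' b = x + t • z := by rw [hb_def]; exact hleft _ hE2
    have hU' := h.smul_mem t⁻¹ (by positivity) _ hU
    have hL' := h.smul_mem t⁻¹ (by positivity) _ hL
    have hfin1 : (c * ε t) • u - (z - t⁻¹ • (g' a - x)) ∈ C := by
      have heq : t⁻¹ • ((4 * s * μ) • u - (g' b - g' a))
          = (c * ε t) • u - (z - t⁻¹ • (g' a - x)) := by
        rw [hgb, hs_def, hc_def]
        match_scalars <;> field_simp <;> ring
      rwa [heq] at hU'
    have hfin2 : (z - t⁻¹ • (g' a - x)) + (c * ε t) • u ∈ C := by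
      have heq : t⁻¹ • ((g' b - g' a) + (4 * s * μ) • u)
          = (z - t⁻¹ • (g' a - x)) + (c * ε t) • u := by
        rw [hgb, hs_def, hc_def]
        match_scalars <;> field_simp <;> ring
      rwa [heq] at hL'
    exact h.norm_le hfin2 hfin1 (le_of_lt (mul_pos hc hεt))
  have htendA' : Tendsto (fun t : ℝ => t⁻¹ • (g' (y + t • w) - x)) (𝓝[>] (0:ℝ)) (𝓝 z) := by
    have hb2 : ∀ᶠ t in 𝓝[>] (0:ℝ), ‖t⁻¹ • (g' (y + t • w) - x) - z‖ ≤ c * ε t := by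
      filter_upwards [hbound] with t hb
      rw [norm_sub_rev]; exact hb
    have hsq := squeeze_zero' (Eventually.of_forall fun t => norm_nonneg _) hb2
      (by simpa using hε0.const_mul c)
    exact tendsto_iff_norm_sub_tendsto_zero.mpr hsq
  have hzu := tendsto_nhds_unique htendA' htendA
  rw [hzu, neg_neg]

end Key

/-- **Proposition 2.6**. The map `G_x(z) = −Δ_x^z g(x)` is a bijective homogeneous
order-isomorphism of `V`, whose inverse is `G_{g⁻¹, g(x)}`. -/
theorem G_bijective_homogeneous_orderIsomorphism
    (C : Set V) (u : V) (hous : IsOrderUnitSpace C u) (hsc : StrictlyConvexCone C)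
    (g g' : V → V) (hbij : Set.BijOn g (interior C) (interior C))
    (hanti : IsAntihomogeneous C g) (hmor : IsOrderAntimorphism C g)
    (hinv : Set.InvOn g' g (interior C) (interior C))
    (x : V) (hx : x ∈ interior C)
    (G G' : V → V)
    (hG : ∀ z : V, Tendsto (fun t : ℝ => t⁻¹ • (g (x + t • z) - g x))
      (𝓝[≠] (0:ℝ)) (𝓝 (-(G z))))
    (hG' : ∀ w : V, Tendsto (fun t : ℝ => t⁻¹ • (g' (g x + t • w) - g' (g x)))
      (𝓝[≠] (0:ℝ)) (𝓝 (-(G' w)))) :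
    Function.Bijective G ∧
    (∀ l : ℝ, ∀ z : V, G (l • z) = l • G z) ∧
    (∀ w z : V, (z - w ∈ C ↔ G z - G w ∈ C)) ∧
    Function.LeftInverse G' G ∧ Function.RightInverse G' G := by

  have hmapg : MapsTo g (interior C) (interior C) := hbij.mapsTo
  have hmapg' : MapsTo g' (interior C) (interior C) := by
    intro v hv
    obtain ⟨a, ha, rfl⟩ := hbij.surjOn hv
    rw [hinv.1 ha]; exact ha
  have hy : g x ∈ interior C := hmapg hx
  have hg'mor : IsOrderAntimorphism C g' := by
    intro a ha b hb
    have h1 := hmor (g' b) (hmapg' hb) (g' a) (hmapg' ha)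
    rw [hinv.2 ha, hinv.2 hb] at h1
    exact h1.symm
  have hg'anti : ∀ l : ℝ, 0 < l → ∀ a ∈ interior C, g' (l • a) = l⁻¹ • g' a := by
    intro l hl a ha
    have hmem : l⁻¹ • g' a ∈ interior C :=
      hous.interior_smul_mem (inv_pos.mpr hl) (hmapg' ha)
    have h1 := hanti l⁻¹ (inv_pos.mpr hl) (g' a) (hmapg' ha)
    rw [inv_inv, hinv.2 ha] at h1
    calc g' (l • a) = g' (g (l⁻¹ • g' a)) := by rw [h1]
      _ = l⁻¹ • g' a := hinv.1 hmem
  have hkey1 : ∀ z, G' (-(G z)) = -z :=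
    G_key hous hmapg hmapg' hg'mor hg'anti (fun a ha => hinv.1 ha) hx hG hG'
  have hGsym : ∀ w : V, Tendsto (fun t : ℝ => t⁻¹ • (g (g' (g x) + t • w) - g (g' (g x))))
      (𝓝[≠] (0:ℝ)) (𝓝 (-(G w))) := by
    intro w'
    simp only [hinv.1 hx]
    exact hG w'
  have hkey2 : ∀ w, G (-(G' w)) = -w :=
    G_key hous hmapg' hmapg hmor (fun l hl a ha => hanti l hl a ha)
      (fun a ha => hinv.2 ha) hy hG' hGsym
  have hhomG : ∀ l : ℝ, ∀ z : V, G (l • z) = l • G z := fun l z => G_homog hG l z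
  have hhomG' : ∀ l : ℝ, ∀ w : V, G' (l • w) = l • G' w := fun l w => G_homog hG' l w
  have hLeft : Function.LeftInverse G' G := by
    intro z
    have h1 := hkey1 z
    have h2 : G' (-(G z)) = -(G' (G z)) := by simpa using hhomG' (-1) (G z)
    rw [h2] at h1
    exact neg_injective h1
  have hRight : Function.RightInverse G' G := by
    intro w
    have h1 := hkey2 w
    have h2 : G (-(G' w)) = -(G (G' w)) := by simpa using hhomG (-1) (G' w)
    rw [h2] at h1
    exact neg_injective h1
  refine ⟨⟨hLeft.injective, hRight.surjective⟩, hhomG, ?_, hLeft, hRight⟩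
  intro w z
  constructor
  · intro hwz
    exact G_mono hous hmor hx hG hwz
  · intro hGz
    have h1 := G_mono hous hg'mor hy hG' hGz
    rwa [hLeft z, hLeft w] at h1
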